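/- Let f : {1,…,k} → ℤ_{>0} denote the lengths of the horizontal segments of TR with ∑ f(i) = b + 1 (ordered left to right), and define the area lower bound A(f) = f(1)(f(1)+1)/2 + ∑_{i=2}^{k} [(f(i)+1)(f(i)+2)/2 − 1]. Then A(f) ≥ 1 + (3/2)b + (1/2)·min{∑ x_i² : x ∈ ℤ_{>0}^{a+1}, ∑ x_i = b}, where a + 1 = k is the number of segments. -/

import Mathlib

/-- Let `f : Fin (a+1) → ℤ_{>0}` be the lengths of the horizontal segments of TR
with `∑ f i = b + 1`, and let `A(f) = f₀(f₀+1)/2 + ∑_{i≠0} [(fᵢ+1)(fᵢ+2)/2 − 1]`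
be the area lower bound. Then `A(f) ≥ 1 + (3/2)b + (1/2)·M`, where `M` is the
minimum of `∑ xᵢ²` over positive integer vectors `x ∈ ℤ_{>0}^{a+1}` with
`∑ xᵢ = b`. -/
theorem area_lower_bound_via_sum_of_squares (a b : ℕ) (f : Fin (a + 1) → ℕ)
    (hf : ∀ i, 0 < f i) (hsum : ∑ i, f i = b + 1) (M : ℕ)
    (hM : IsLeast {s : ℕ | ∃ x : Fin (a + 1) → ℕ, (∀ i, 0 < x i) ∧
        (∑ i, x i = b) ∧ s = ∑ i, (x i) ^ 2} M) :
    (1 : ℚ) + 3 / 2 * b + (M : ℚ) / 2 ≤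
      (f 0 : ℚ) * ((f 0 : ℚ) + 1) / 2 +
        ∑ i ∈ Finset.univ.erase (0 : Fin (a + 1)),
          (((f i : ℚ) + 1) * ((f i : ℚ) + 2) / 2 - 1) := by
  have h0mem : (0 : Fin (a+1)) ∈ (Finset.univ : Finset (Fin (a+1))) := Finset.mem_univ _
  set E := (Finset.univ : Finset (Fin (a+1))).erase 0 with hE
  have hsplit : f 0 + ∑ i ∈ E, f i = b + 1 := by
    rw [hE, Finset.add_sum_erase _ f h0mem, hsum]
  set S := ∑ i ∈ E, f i with hS
  set S2 := ∑ i ∈ E, f i ^ 2 with hS2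
  -- Key natural-number inequality
  have key : 2 + 3 * b + M ≤ f 0 * (f 0 + 1) + (S2 + 3 * S) := by
    by_cases h2 : 2 ≤ f 0
    · -- decrement f 0
      set x : Fin (a+1) → ℕ := fun i => if i = 0 then f 0 - 1 else f i with hx
      have hxE : ∀ i ∈ E, x i = f i := by
        intro i hi
        simp [hx, Finset.ne_of_mem_erase hi]
      have hxsum : ∑ i, x i = b := by
        have h1 : ∑ i, x i = x 0 + ∑ i ∈ E, x i := by
          rw [hE, Finset.add_sum_erase _ x h0mem]
        rw [h1, Finset.sum_congr rfl hxE, ← hS]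
        simp only [hx, if_pos rfl]
        omega
      have hxpos : ∀ i, 0 < x i := by
        intro i
        by_cases hi : i = 0 <;> simp [hx, hi] <;> [omega; exact hf i]
      have hMle : M ≤ ∑ i, x i ^ 2 := hM.2 ⟨x, hxpos, hxsum, rfl⟩
      have hxsq : ∑ i, x i ^ 2 = (f 0 - 1) ^ 2 + S2 := by
        have h1 : ∑ i, x i ^ 2 = x 0 ^ 2 + ∑ i ∈ E, x i ^ 2 := by
          rw [hE, Finset.add_sum_erase _ (fun i => x i ^ 2) h0mem]
        rw [h1, Finset.sum_congr rfl (fun i hi => by rw [hxE i hi]), ← hS2]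
        simp [hx]
      rw [hxsq] at hMle
      obtain ⟨c, hc⟩ : ∃ c, f 0 = c + 1 := ⟨f 0 - 1, by omega⟩
      rw [hc] at hMle hsplit ⊢
      simp only [Nat.add_sub_cancel] at hMle
      nlinarith
    · -- f 0 = 1; find j with f j ≥ 2 in E
      have hf0 : f 0 = 1 := by have := hf 0; omega
      have hbS : S = b := by omega
      -- the set is nonempty so b ≥ a + 1
      obtain ⟨x₀, hx₀pos, hx₀sum, _⟩ := hM.1
      have hbge : a + 1 ≤ b := by
        calc a + 1 = ∑ _i : Fin (a+1), 1 := by simp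
        _ ≤ ∑ i, x₀ i := Finset.sum_le_sum (fun i _ => hx₀pos i)
        _ = b := hx₀sum
      have hcardE : E.card = a := by
        rw [hE, Finset.card_erase_of_mem h0mem, Finset.card_univ, Fintype.card_fin]
        omega
      have hexj : ∃ j ∈ E, 2 ≤ f j := by
        by_contra hc
        push_neg at hc
        have : S ≤ ∑ _i ∈ E, 1 := Finset.sum_le_sum (fun i hi => by have := hc i hi; omega)
        simp [hcardE] at this
        omega
      obtain ⟨j, hjE, hj2⟩ := hexj
      set x : Fin (a+1) → ℕ := fun i => if i = j then f j - 1 else f i with hx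
      have hxne : ∀ i ∈ Finset.univ.erase j, x i = f i := fun i hi => by
        simp [hx, Finset.ne_of_mem_erase hi]
      have hxpos : ∀ i, 0 < x i := by
        intro i
        by_cases hi : i = j <;> simp [hx, hi] <;> [omega; exact hf i]
      have hsj : f j + ∑ i ∈ Finset.univ.erase j, f i = b + 1 := by
        rw [Finset.add_sum_erase _ f (Finset.mem_univ j), hsum]
      have hEsum2 : ∑ i ∈ Finset.univ.erase j, x i = ∑ i ∈ Finset.univ.erase j, f i :=
        Finset.sum_congr rfl hxne
      have hxsum : ∑ i, x i = b := by
        rw [← Finset.add_sum_erase _ x (Finset.mem_univ j), hEsum2]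
        simp only [hx, if_pos rfl]
        omega
      have hEsq : ∑ i ∈ Finset.univ.erase j, x i ^ 2
          = ∑ i ∈ Finset.univ.erase j, f i ^ 2 :=
        Finset.sum_congr rfl (fun i hi => by rw [hxne i hi])
      have hsqj : f j ^ 2 + ∑ i ∈ Finset.univ.erase j, f i ^ 2 = 1 + S2 := by
        rw [Finset.add_sum_erase _ (fun i => f i ^ 2) (Finset.mem_univ j),
          ← Finset.add_sum_erase _ (fun i => f i ^ 2) h0mem, ← hE, ← hS2, hf0]
        omega
      have hMle : M ≤ ∑ i, x i ^ 2 := hM.2 ⟨x, hxpos, hxsum, rfl⟩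
      rw [← Finset.add_sum_erase _ (fun i => x i ^ 2) (Finset.mem_univ j), hEsq] at hMle
      simp only [hx, if_pos rfl] at hMle
      obtain ⟨c, hc⟩ : ∃ c, f j = c + 2 := ⟨f j - 2, by omega⟩
      rw [hc] at hMle hsqj
      have hc1 : c + 2 - 1 = c + 1 := by omega
      rw [hc1] at hMle
      rw [hf0]
      nlinarith [sq_nonneg (c + 1)]
  -- Pass to ℚ
  have hsumcast : ∑ i ∈ E, (((f i : ℚ) + 1) * ((f i : ℚ) + 2) / 2 - 1)
      = ((S2 : ℚ) + 3 * S) / 2 := by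
    have h1 : ∀ i ∈ E, (((f i : ℚ) + 1) * ((f i : ℚ) + 2) / 2 - 1)
        = ((f i : ℚ) ^ 2 + 3 * (f i : ℚ)) / 2 := fun i _ => by ring
    rw [Finset.sum_congr rfl h1, ← Finset.sum_div, Finset.sum_add_distrib,
      ← Finset.mul_sum, hS2, hS]
    push_cast
    ring
  rw [hE] at hsumcast ⊢
  rw [hsumcast]
  have : (2 + 3 * b + M : ℚ) ≤ (f 0 * (f 0 + 1) + (S2 + 3 * S) : ℕ) := by
    exact_mod_cast Nat.cast_le.mpr key
  push_cast at this
  linarith
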